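/- arXiv:1307.3214 — 2 statements merged into one kernel-verified Lean document; each statement's English description precedes it below -/
import Mathlib

section
/- Let (Ω, F, P) be a probability space and (Λ_n)_{n≥1} an i.i.d. sequence of nonnegative real random variables whose common law has Lebesgue density p, and assume P(Λ_1 > A) > 0 for a fixed A > 0. For x ≥ 0 define R_0^x = x, R_{n+1}^x = (1 + R_n^x)·Λ_{n+1}, S_A^x = inf{n ≥ 1 : R_n^x ≥ A}, ℓ(x) = E[S_A^x], and μ_2(x) = E[(S_A^x)²]. Let K(x,y) = p(y/(1+x))/(1+x). Then μ_2(x) is finite for all x ∈ [0,A] and satisfies μ_2(x) = 2·ℓ(x) − 1 + ∫_0^A K(x,y)·μ_2(y) dy. -/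
open MeasureTheory ProbabilityTheory
open scoped ENNReal NNReal

/-- deterministic GSR chain driven by a sequence `v`. -/
def gsrCC (y : ℝ) (v : ℕ → ℝ) : ℕ → ℝ
  | 0 => y
  | n+1 => (1 + gsrCC y v n) * v n

lemma gsrCC_congr (y : ℝ) {v w : ℕ → ℝ} {m : ℕ} (h : ∀ j < m, v j = w j) :
    gsrCC y v m = gsrCC y w m := by
  induction m with
  | zero => rfl
  | succ n ih =>
    show (1 + gsrCC y v n) * v n = (1 + gsrCC y w n) * w n
    rw [ih (fun j hj => h j (Nat.lt_succ_of_lt hj)), h n (Nat.lt_succ_self n)]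

lemma gsrCC_shift (y : ℝ) (v : ℕ → ℝ) (m : ℕ) :
    gsrCC y v (m+1) = gsrCC ((1 + y) * v 0) (fun j => v (j+1)) m := by
  induction m with
  | zero => rfl
  | succ n ih =>
    show (1 + gsrCC y v (n+1)) * v (n+1) = _
    rw [ih]; rfl

lemma measurable_gsrCC (m : ℕ) :
    Measurable (fun q : ℝ × (ℕ → ℝ) => gsrCC q.1 q.2 m) := by
  induction m with
  | zero => exact measurable_fst
  | succ n ih =>
    exact ((measurable_const.add ih).mul ((measurable_pi_apply n).comp measurable_snd))

/-- prepend an element to a sequence -/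
def ncons (a : ℝ) (v : ℕ → ℝ) : ℕ → ℝ
  | 0 => a
  | n+1 => v n

lemma gsrCC_ncons (y a : ℝ) (v : ℕ → ℝ) (m : ℕ) :
    gsrCC y (ncons a v) (m+1) = gsrCC ((1 + y) * a) v m := by
  rw [gsrCC_shift]
  congr 1

lemma sum_range_odd (n : ℕ) :
    (∑ k ∈ Finset.range n, (2 * (k : ℝ≥0∞) + 1)) = (n : ℝ≥0∞) ^ 2 := by
  induction n with
  | zero => simp
  | succ m ih =>
    rw [Finset.sum_range_succ, ih]
    push_cast
    ring

lemma enat_sq_eq (a : ℕ∞) :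
    (a : ℝ≥0∞) ^ 2 = ∑' k : ℕ, (2 * (k : ℝ≥0∞) + 1) * (if (k : ℕ∞) < a then 1 else 0) := by
  cases a with
  | top =>
    have h1 : ∀ k : ℕ, ((k : ℕ∞) < (⊤:ℕ∞)) := fun k => lt_of_le_of_ne le_top (by simp)
    simp only [ENat.toENNReal_top, h1, if_true, mul_one]
    rw [ENNReal.top_pow (by norm_num)]
    refine (eq_top_iff.2 ?_).symm
    calc (⊤:ℝ≥0∞) = ∑' _ : ℕ, (1:ℝ≥0∞) :=
          (ENNReal.tsum_const_eq_top_of_ne_zero one_ne_zero).symm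
      _ ≤ _ := ENNReal.tsum_le_tsum fun k => le_add_self
  | coe n =>
    have h2 : ∀ k : ℕ, ((k : ℕ∞) < (n : ℕ∞)) ↔ k < n := fun k => Nat.cast_lt
    calc ((↑(n:ℕ∞) : ℝ≥0∞)) ^ 2 = (n : ℝ≥0∞) ^ 2 := by rw [ENat.toENNReal_coe]
    _ = ∑ k ∈ Finset.range n, (2 * (k : ℝ≥0∞) + 1) := (sum_range_odd n).symm
    _ = ∑' k : ℕ, (2 * (k : ℝ≥0∞) + 1) * (if (k : ℕ∞) < (n:ℕ∞) then 1 else 0) := by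
        rw [tsum_eq_sum (s := Finset.range n) ?h0]
        · refine Finset.sum_congr rfl fun k hk => ?_
          rw [if_pos ((h2 k).2 (Finset.mem_range.1 hk)), mul_one]
        · intro k hk
          rw [if_neg (fun hlt => hk (Finset.mem_range.2 ((h2 k).1 hlt))), mul_zero]

lemma enat_eq (a : ℕ∞) :
    (a : ℝ≥0∞) = ∑' k : ℕ, (if (k : ℕ∞) < a then 1 else 0) := by
  cases a with
  | top =>
    have h1 : ∀ k : ℕ, ((k : ℕ∞) < (⊤:ℕ∞)) := fun k => lt_of_le_of_ne le_top (by simp)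
    simp only [ENat.toENNReal_top, h1, if_true]
    exact (ENNReal.tsum_const_eq_top_of_ne_zero one_ne_zero).symm
  | coe n =>
    have h2 : ∀ k : ℕ, ((k : ℕ∞) < (n : ℕ∞)) ↔ k < n := fun k => Nat.cast_lt
    calc ((↑(n:ℕ∞) : ℝ≥0∞)) = (n : ℝ≥0∞) := by rw [ENat.toENNReal_coe]
    _ = ∑ k ∈ Finset.range n, (1:ℝ≥0∞) := by simp
    _ = ∑' k : ℕ, (if (k : ℕ∞) < (n:ℕ∞) then 1 else 0) := by
        rw [tsum_eq_sum (s := Finset.range n) ?h0]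
        · exact Finset.sum_congr rfl fun k hk => (if_pos ((h2 k).2 (Finset.mem_range.1 hk))).symm
        · exact fun k hk => if_neg (fun hlt => hk (Finset.mem_range.2 ((h2 k).1 hlt)))

lemma geom_moment_lt_top {ρ : ℝ≥0∞} (hρ : ρ < 1) :
    ∑' k : ℕ, (2 * (k : ℝ≥0∞) + 1) * ρ ^ k < ⊤ := by
  have hne : ρ ≠ ⊤ := hρ.ne_top
  lift ρ to ℝ≥0 using hne with r
  have hr : (r : ℝ) < 1 := by exact_mod_cast hρ
  have hnorm : ‖(r:ℝ)‖ < 1 := by rw [Real.norm_eq_abs, abs_of_nonneg r.coe_nonneg]; exact hr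
  have hs : Summable (fun k : ℕ => (2 * (k:ℝ) + 1) * (r:ℝ) ^ k) := by
    have h1 := summable_pow_mul_geometric_of_norm_lt_one 1 hnorm
    have h0 := summable_pow_mul_geometric_of_norm_lt_one 0 hnorm
    exact ((h1.mul_left 2).add h0).congr fun k => by push_cast; ring
  have hs' : Summable (fun k : ℕ => (2 * (k:ℝ≥0) + 1) * r ^ k) := by
    rw [← NNReal.summable_coe]
    exact hs.congr fun k => by push_cast; ring
  have hco : ∑' k : ℕ, (2 * (k : ℝ≥0∞) + 1) * (r:ℝ≥0∞) ^ k
      = ((∑' k : ℕ, (2 * (k:ℝ≥0) + 1) * r ^ k : ℝ≥0) : ℝ≥0∞) := by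
    rw [ENNReal.coe_tsum hs']
    exact tsum_congr fun k => by push_cast; ring
  rw [hco]
  exact ENNReal.coe_lt_top

/-- extend a finite vector by zeros -/
def finExt (k : ℕ) (w : Fin k → ℝ) : ℕ → ℝ := fun n => if h : n < k then w ⟨n, h⟩ else 0

lemma measurable_finExt (k : ℕ) : Measurable (fun w : Fin k → ℝ => finExt k w) := by
  refine measurable_pi_lambda _ fun n => ?_
  by_cases h : n < k
  · simp only [finExt, dif_pos h]; exact measurable_pi_apply _
  · simp only [finExt, dif_neg h]; exact measurable_const

/-- the event that the chain started at `y` stays below `A` during steps `1..k` -/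
def gsrG (A : ℝ) (k : ℕ) (y : ℝ) : Set (Fin k → ℝ) :=
  {w | ∀ m, 1 ≤ m → m ≤ k → gsrCC y (finExt k w) m < A}

lemma measurableSet_gsrG_prod (A : ℝ) (k : ℕ) :
    MeasurableSet {q : ℝ × (Fin k → ℝ) | q.2 ∈ gsrG A k q.1} := by
  have : {q : ℝ × (Fin k → ℝ) | q.2 ∈ gsrG A k q.1}
      = ⋂ m ∈ Finset.Icc 1 k, {q : ℝ × (Fin k → ℝ) | gsrCC q.1 (finExt k q.2) m < A} := by
    ext q
    simp only [Set.mem_setOf_eq, gsrG, Set.mem_iInter, Finset.mem_Icc]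
    exact ⟨fun h m hm => h m hm.1 hm.2, fun h m h1 h2 => h m ⟨h1, h2⟩⟩
  rw [this]
  refine Set.Finite.measurableSet_biInter (Finset.Icc 1 k).finite_toSet fun m _ => ?_
  exact measurableSet_lt
    ((measurable_gsrCC m).comp (measurable_fst.prodMk ((measurable_finExt k).comp measurable_snd)))
    measurable_const

lemma measurableSet_gsrG (A : ℝ) (k : ℕ) (y : ℝ) : MeasurableSet (gsrG A k y) :=
  measurable_prodMk_left (measurableSet_gsrG_prod A k)

lemma finExt_cons (k : ℕ) (u : ℝ) (w : Fin k → ℝ) :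
    finExt (k+1) (Fin.cons u w) = ncons u (finExt k w) := by
  funext n
  cases n with
  | zero =>
    show (if h : 0 < k + 1 then (Fin.cons u w : Fin (k+1) → ℝ) ⟨0, h⟩ else 0) = u
    rw [dif_pos (Nat.succ_pos k), Fin.mk_zero, Fin.cons_zero]
  | succ n =>
    show (if h : n + 1 < k + 1 then (Fin.cons u w : Fin (k+1) → ℝ) ⟨n+1, h⟩ else 0)
        = (if h : n < k then w ⟨n, h⟩ else 0)
    by_cases h : n < k
    · rw [dif_pos (Nat.succ_lt_succ h), dif_pos h]
      exact Fin.cons_succ (α := fun _ : Fin (k+1) => ℝ) u w ⟨n, h⟩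
    · rw [dif_neg (fun hc => h (Nat.lt_of_succ_lt_succ hc)), dif_neg h]

lemma gsrG_cons (A : ℝ) (k : ℕ) (x u : ℝ) (w : Fin k → ℝ) :
    (Fin.cons u w ∈ gsrG A (k+1) x) ↔ ((1+x)*u < A ∧ w ∈ gsrG A k ((1+x)*u)) := by
  simp only [gsrG, Set.mem_setOf_eq, finExt_cons]
  constructor
  · intro h
    constructor
    · have h1 := h 1 le_rfl (Nat.le_add_left 1 k)
      rwa [show (1:ℕ) = 0 + 1 from rfl, gsrCC_ncons] at h1
    · intro m h1 h2
      have hm := h (m+1) (Nat.le_add_left 1 m) (Nat.succ_le_succ h2)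
      rwa [gsrCC_ncons] at hm
  · rintro ⟨h0, h⟩ m h1 h2
    obtain ⟨j, rfl⟩ := Nat.exists_eq_add_of_le h1
    rw [Nat.add_comm 1 j, gsrCC_ncons]
    cases Nat.eq_zero_or_pos j with
    | inl hj => subst hj; exact h0
    | inr hj => exact h j hj (by omega)

/-- decomposition of the first step of the chain event under a product measure -/
lemma pi_gsrG_succ (ν : Measure ℝ) [IsProbabilityMeasure ν] (A : ℝ) (k : ℕ) (x : ℝ) :
    Measure.pi (fun _ : Fin (k+1) => ν) (gsrG A (k+1) x)
      = ∫⁻ u, Set.indicator {u : ℝ | (1+x)*u < A}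
          (fun u => Measure.pi (fun _ : Fin k => ν) (gsrG A k ((1+x)*u))) u ∂ν := by
  set e := MeasurableEquiv.piFinSuccAbove (fun _ : Fin (k+1) => ℝ) 0 with he
  have hmp := measurePreserving_piFinSuccAbove (fun _ : Fin (k+1) => ν) 0
  rw [← he] at hmp
  have hsymm : ∀ (u : ℝ) (w : Fin k → ℝ), e.symm (u, w) = Fin.cons u w := by
    intro u w
    simp [he, MeasurableEquiv.piFinSuccAbove, Fin.insertNthEquiv_zero, Fin.consEquiv]
  have hGmeas := measurableSet_gsrG A (k+1) x
  have hGmeas' : MeasurableSet (e.symm ⁻¹' (gsrG A (k+1) x)) := e.symm.measurable hGmeas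
  have hpre : gsrG A (k+1) x = e ⁻¹' (e.symm ⁻¹' (gsrG A (k+1) x)) := by
    rw [← Set.preimage_comp]
    simp
  rw [hpre, hmp.measure_preimage hGmeas'.nullMeasurableSet,
    Measure.prod_apply hGmeas']
  refine lintegral_congr fun u => ?_
  have hsec : (Prod.mk u ⁻¹' (e.symm ⁻¹' gsrG A (k+1) x))
      = if (1+x)*u < A then gsrG A k ((1+x)*u) else ∅ := by
    ext w
    simp only [Set.mem_preimage, hsymm, gsrG_cons]
    by_cases hu : (1+x)*u < A
    · simp [hu]
    · simp [hu]
  rw [hsec, Set.indicator_apply]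
  by_cases hu : (1+x)*u < A
  · rw [if_pos hu, if_pos (show u ∈ {u : ℝ | (1+x)*u < A} from hu)]
  · rw [if_neg hu, if_neg (show u ∉ {u : ℝ | (1+x)*u < A} from hu), measure_empty]

/-- layer-cake for square of ℕ∞-valued functions -/
lemma lintegral_enat_sq {Ω : Type*} [MeasurableSpace Ω] (P : Measure Ω) (f : Ω → ℕ∞)
    (hE : ∀ k : ℕ, MeasurableSet {ω | (k:ℕ∞) < f ω}) :
    ∫⁻ ω, (f ω : ℝ≥0∞)^2 ∂P = ∑' k:ℕ, (2*(k:ℝ≥0∞)+1) * P {ω | (k:ℕ∞) < f ω} := by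
  calc ∫⁻ ω, (f ω : ℝ≥0∞)^2 ∂P
      = ∫⁻ ω, ∑' k:ℕ, (2*(k:ℝ≥0∞)+1) * Set.indicator {ω | (k:ℕ∞) < f ω} (fun _ => 1) ω ∂P := by
        refine lintegral_congr fun ω => ?_
        rw [enat_sq_eq]
        exact tsum_congr fun k => by rw [Set.indicator_apply]; rfl
    _ = ∑' k:ℕ, ∫⁻ ω, (2*(k:ℝ≥0∞)+1) * Set.indicator {ω | (k:ℕ∞) < f ω} (fun _ => 1) ω ∂P := by
        exact lintegral_tsum fun k =>
          (measurable_const.mul ((measurable_const.indicator (hE k)))).aemeasurable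
    _ = ∑' k:ℕ, (2*(k:ℝ≥0∞)+1) * P {ω | (k:ℕ∞) < f ω} := by
        refine tsum_congr fun k => ?_
        rw [lintegral_const_mul _ (measurable_const.indicator (hE k))]
        congr 1
        exact lintegral_indicator_one (hE k)

/-- layer-cake for ℕ∞-valued functions -/
lemma lintegral_enat {Ω : Type*} [MeasurableSpace Ω] (P : Measure Ω) (f : Ω → ℕ∞)
    (hE : ∀ k : ℕ, MeasurableSet {ω | (k:ℕ∞) < f ω}) :
    ∫⁻ ω, (f ω : ℝ≥0∞) ∂P = ∑' k:ℕ, P {ω | (k:ℕ∞) < f ω} := by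
  calc ∫⁻ ω, (f ω : ℝ≥0∞) ∂P
      = ∫⁻ ω, ∑' k:ℕ, Set.indicator {ω | (k:ℕ∞) < f ω} (fun _ => 1) ω ∂P := by
        refine lintegral_congr fun ω => ?_
        rw [enat_eq]
        exact tsum_congr fun k => by rw [Set.indicator_apply]; rfl
    _ = ∑' k:ℕ, ∫⁻ ω, Set.indicator {ω | (k:ℕ∞) < f ω} (fun _ => 1) ω ∂P :=
        lintegral_tsum fun k => (measurable_const.indicator (hE k)).aemeasurable
    _ = ∑' k:ℕ, P {ω | (k:ℕ∞) < f ω} := tsum_congr fun k => lintegral_indicator_one (hE k)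

/-- The second moment `μ₂ x = E[(S_A^x)²]` of the GSR stopping time
is finite on `[0,A]` and satisfies `μ₂ x = 2·ℓ x - 1 + ∫_0^A K x y · μ₂ y dy`, where
`ℓ x = E[S_A^x]` and `K x y = p (y/(1+x)) / (1+x)`. -/
theorem stmt11 {Ω : Type*} [MeasurableSpace Ω] (P : Measure Ω) [IsProbabilityMeasure P]
    (Λ : ℕ → Ω → ℝ) (hmeas : ∀ n, Measurable (Λ n))
    (hindep : iIndepFun Λ P)
    (hident : ∀ n, IdentDistrib (Λ n) (Λ 1) P P)
    (hnonneg : ∀ n ω, 0 ≤ Λ n ω)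
    (p : ℝ → ℝ) (hp_nonneg : ∀ t, 0 ≤ p t) (hp_meas : Measurable p)
    (hdens : Measure.map (Λ 1) P = volume.withDensity (fun t => ENNReal.ofReal (p t)))
    (A : ℝ) (hA : 0 < A) (hpos : 0 < P {ω | A < Λ 1 ω})
    (R : ℝ → ℕ → Ω → ℝ)
    (hR0 : ∀ x, R x 0 = fun _ => x)
    (hRrec : ∀ x n, R x (n + 1) = fun ω => (1 + R x n ω) * Λ (n + 1) ω)
    (S : ℝ → Ω → ℕ∞)
    (hS : ∀ x ω, S x ω = sInf {n : ℕ∞ | ∃ m : ℕ, n = m ∧ 1 ≤ m ∧ A ≤ R x m ω})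
    (ℓ : ℝ → ℝ≥0∞)
    (hℓ : ∀ x, ℓ x = ∫⁻ ω, (S x ω : ℝ≥0∞) ∂P)
    (μ₂ : ℝ → ℝ≥0∞)
    (hμ₂ : ∀ x, μ₂ x = ∫⁻ ω, ((S x ω : ℝ≥0∞)) ^ 2 ∂P)
    (K : ℝ → ℝ → ℝ)
    (hK : ∀ x y, K x y = p (y / (1 + x)) / (1 + x)) :
    ∀ x ∈ Set.Icc (0:ℝ) A, μ₂ x < ⊤ ∧
      (μ₂ x).toReal = 2 * (ℓ x).toReal - 1 + ∫ y in (0:ℝ)..A, K x y * (μ₂ y).toReal := by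
  classical
  set μΛ : Measure ℝ := Measure.map (Λ 1) P with hμΛ
  haveI hμΛprob : IsProbabilityMeasure μΛ := Measure.isProbabilityMeasure_map (hmeas 1).aemeasurable
  have hmapΛ : ∀ n, Measure.map (Λ n) P = μΛ := fun n => by
    rw [hμΛ]; exact (hident n).map_eq
  -- basic facts about R
  have hRmeas : ∀ x n, Measurable (R x n) := by
    intro x n
    induction n with
    | zero => rw [hR0]; exact measurable_const
    | succ n ih => rw [hRrec]; exact (measurable_const.add ih).mul (hmeas (n+1))
  have hRcc : ∀ x m (ω : Ω), R x m ω = gsrCC x (fun n => Λ (n+1) ω) m := by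
    intro x m ω
    induction m with
    | zero => rw [hR0]; rfl
    | succ n ih =>
      rw [hRrec]
      show (1 + R x n ω) * Λ (n+1) ω = _
      rw [ih]
      rfl
  have hRnonneg : ∀ x : ℝ, 0 ≤ x → ∀ m (ω : Ω), 0 ≤ R x m ω := by
    intro x hx m ω
    induction m with
    | zero => rw [hR0]; exact hx
    | succ n ih =>
      rw [hRrec]
      exact mul_nonneg (by linarith) (hnonneg (n+1) ω)
  -- characterization of the stopping time level sets
  have hlt : ∀ x (ω : Ω) (k : ℕ),
      ((k:ℕ∞) < S x ω ↔ ∀ m : ℕ, 1 ≤ m → m ≤ k → R x m ω < A) := by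
    intro x ω k
    rw [hS]
    constructor
    · intro h m h1 h2
      by_contra hge
      push_neg at hge
      have hmem : (m:ℕ∞) ∈ {n : ℕ∞ | ∃ m' : ℕ, n = m' ∧ 1 ≤ m' ∧ A ≤ R x m' ω} :=
        ⟨m, rfl, h1, hge⟩
      have hkm : (k:ℕ∞) < (m:ℕ∞) := lt_of_lt_of_le h (sInf_le hmem)
      rw [Nat.cast_lt] at hkm
      omega
    · intro h
      have hle : ((k+1 : ℕ):ℕ∞) ≤ sInf {n : ℕ∞ | ∃ m' : ℕ, n = m' ∧ 1 ≤ m' ∧ A ≤ R x m' ω} := by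
        refine le_sInf ?_
        rintro b ⟨m, rfl, h1, hge⟩
        rw [Nat.cast_le]
        by_contra hmk
        push_neg at hmk
        exact absurd hge (not_le.2 (h m h1 (by omega)))
      exact lt_of_lt_of_le (by rw [Nat.cast_lt]; omega) hle
  have hE : ∀ x (k:ℕ),
      {ω | (k:ℕ∞) < S x ω} = ⋂ m ∈ Finset.Icc 1 k, {ω | R x m ω < A} := by
    intro x k
    ext ω
    simp only [Set.mem_setOf_eq, Set.mem_iInter, Finset.mem_Icc]
    rw [hlt x ω k]
    exact ⟨fun h m hm => h m hm.1 hm.2, fun h m h1 h2 => h m ⟨h1, h2⟩⟩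
  have hEmeas : ∀ x (k:ℕ), MeasurableSet {ω | (k:ℕ∞) < S x ω} := by
    intro x k
    rw [hE]
    exact Set.Finite.measurableSet_biInter (Finset.Icc 1 k).finite_toSet fun m _ =>
      measurableSet_lt (hRmeas x m) measurable_const
  have hμ₂sum : ∀ x : ℝ, μ₂ x = ∑' k:ℕ, (2*(k:ℝ≥0∞)+1) * P {ω | (k:ℕ∞) < S x ω} := fun x => by
    rw [hμ₂]; exact lintegral_enat_sq P (S x) (hEmeas x)
  have hℓsum : ∀ x : ℝ, ℓ x = ∑' k:ℕ, P {ω | (k:ℕ∞) < S x ω} := fun x => by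
    rw [hℓ]; exact lintegral_enat P (S x) (hEmeas x)
  -- joint law of the first k innovations
  have hJmeas : ∀ k:ℕ, Measurable (fun ω (i : Fin k) => Λ ((i:ℕ)+1) ω) := fun k =>
    measurable_pi_lambda _ fun i => hmeas _
  have hJlaw : ∀ k:ℕ, Measure.map (fun ω (i : Fin k) => Λ ((i:ℕ)+1) ω) P
      = Measure.pi (fun _ : Fin k => μΛ) := by
    intro k
    refine (Measure.pi_eq fun s hs => ?_).symm
    rw [Measure.map_apply (hJmeas k) (MeasurableSet.univ_pi hs)]
    set t : ℕ → Set ℝ := fun m => if h : m - 1 < k then s ⟨m-1, h⟩ else Set.univ with ht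
    have htmeas : ∀ m, MeasurableSet (t m) := by
      intro m
      rw [ht]
      dsimp only
      split
      · exact hs _
      · exact MeasurableSet.univ
    have hti : ∀ i : Fin k, t ((i:ℕ)+1) = s i := by
      intro i
      rw [ht]
      dsimp only
      rw [dif_pos (by simpa using i.isLt)]
      exact congrArg s (Fin.ext (by simp))
    have hpre : (fun ω (i : Fin k) => Λ ((i:ℕ)+1) ω) ⁻¹' (Set.univ.pi s)
        = ⋂ m ∈ Finset.image (fun i : Fin k => (i:ℕ)+1) Finset.univ, Λ m ⁻¹' t m := by
      ext ω
      simp only [Set.mem_preimage, Set.mem_univ_pi, Set.mem_iInter, Finset.mem_image,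
        Finset.mem_univ, true_and, Set.mem_preimage]
      constructor
      · rintro h m ⟨i, rfl⟩
        rw [hti i]
        exact h i
      · intro h i
        have := h ((i:ℕ)+1) ⟨i, rfl⟩
        rwa [hti i] at this
    rw [hpre, hindep.measure_inter_preimage_eq_mul _ (fun m _ => htmeas m)]
    rw [Finset.prod_image (by intro a _ b _ hab; exact Fin.ext (Nat.succ_injective hab))]
    refine Finset.prod_congr rfl fun i _ => ?_
    rw [hti i, ← hmapΛ ((i:ℕ)+1), Measure.map_apply (hmeas _) (hs i)]
  -- identification of level-set probabilities with pi-measures of gsrG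
  have hq : ∀ (y:ℝ) (k:ℕ),
      P {ω | (k:ℕ∞) < S y ω} = Measure.pi (fun _ : Fin k => μΛ) (gsrG A k y) := by
    intro y k
    rw [← hJlaw k, Measure.map_apply (hJmeas k) (measurableSet_gsrG A k y)]
    congr 1
    ext ω
    simp only [Set.mem_setOf_eq, Set.mem_preimage, gsrG]
    rw [hlt y ω k]
    refine forall_congr' fun m => imp_congr_right fun h1 => imp_congr_right fun h2 => ?_
    have hcc : R y m ω = gsrCC y (finExt k (fun i : Fin k => Λ ((i:ℕ)+1) ω)) m := by
      rw [hRcc]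
      refine gsrCC_congr y fun j hj => ?_
      simp only [finExt]
      rw [dif_pos (lt_of_lt_of_le hj h2)]
    rw [hcc]
  have hqmeas : ∀ k:ℕ, Measurable (fun y => Measure.pi (fun _ : Fin k => μΛ) (gsrG A k y)) := by
    intro k
    have := measurable_measure_prodMk_left (ν := Measure.pi (fun _ : Fin k => μΛ))
      (measurableSet_gsrG_prod A k)
    exact this
  have hμ₂q : ∀ y : ℝ, μ₂ y = ∑' k:ℕ, (2*(k:ℝ≥0∞)+1)
      * Measure.pi (fun _ : Fin k => μΛ) (gsrG A k y) := by
    intro y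
    rw [hμ₂sum y]
    exact tsum_congr fun k => by rw [hq y k]
  have hμ₂meas : Measurable μ₂ := by
    have : μ₂ = fun y => ∑' k:ℕ, (2*(k:ℝ≥0∞)+1)
        * Measure.pi (fun _ : Fin k => μΛ) (gsrG A k y) := funext fun y => hμ₂q y
    rw [this]
    exact Measurable.ennreal_tsum fun k => measurable_const.mul (hqmeas k)
  -- geometric bound
  set ρ : ℝ≥0∞ := μΛ (Set.Iic A) with hρdef
  have hρ : ρ < 1 := by
    have hioi : μΛ (Set.Ioi A) = P {ω | A < Λ 1 ω} := by
      rw [hμΛ, Measure.map_apply (hmeas 1) measurableSet_Ioi]; rfl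
    have h1 : ρ = 1 - μΛ (Set.Ioi A) := by
      rw [hρdef, ← Set.compl_Ioi, prob_compl_eq_one_sub measurableSet_Ioi]
    rw [h1]
    exact ENNReal.sub_lt_self ENNReal.one_ne_top one_ne_zero (by rw [hioi]; exact hpos.ne')
  have hbound : ∀ y:ℝ, 0 ≤ y → ∀ k:ℕ, P {ω | (k:ℕ∞) < S y ω} ≤ ρ^k := by
    intro y hy k
    have hsub : {ω | (k:ℕ∞) < S y ω} ⊆ ⋂ m ∈ Finset.Icc 1 k, Λ m ⁻¹' Set.Iic A := by
      intro ω hω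
      rw [Set.mem_setOf_eq, hlt y ω k] at hω
      simp only [Set.mem_iInter, Finset.mem_Icc, Set.mem_preimage, Set.mem_Iic]
      rintro m ⟨h1, h2⟩
      by_contra hgt
      push_neg at hgt
      obtain ⟨n, rfl⟩ : ∃ n, m = n+1 := ⟨m-1, by omega⟩
      have hR := hω (n+1) h1 h2
      have hRn := hRnonneg y hy n ω
      rw [hRrec] at hR
      simp only at hR
      nlinarith
    refine le_trans (measure_mono hsub) ?_
    rw [hindep.measure_inter_preimage_eq_mul _ (fun m (_ : m ∈ Finset.Icc 1 k) =>
      (measurableSet_Iic : MeasurableSet (Set.Iic A)))]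
    have hfac : ∀ m ∈ Finset.Icc 1 k, P (Λ m ⁻¹' Set.Iic A) = ρ := fun m _ => by
      rw [hρdef, ← hmapΛ m, Measure.map_apply (hmeas m) measurableSet_Iic]
    rw [Finset.prod_congr rfl hfac, Finset.prod_const, Nat.card_Icc]
    simp
  have hfin : ∀ y:ℝ, 0 ≤ y → μ₂ y < ⊤ := by
    intro y hy
    rw [hμ₂sum y]
    exact lt_of_le_of_lt
      (ENNReal.tsum_le_tsum fun k => mul_le_mul_right (hbound y hy k) _)
      (geom_moment_lt_top hρ)
  intro x hx
  have hc : (0:ℝ) < 1 + x := by linarith [hx.1]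
  refine ⟨hfin x hx.1, ?_⟩
  -- the one-step (Markov) decomposition
  have msA : MeasurableSet {u : ℝ | (1+x)*u < A} :=
    measurableSet_lt (measurable_id.const_mul (1+x)) measurable_const
  have hstep : ∀ k:ℕ, P {ω | (((k+1:ℕ)):ℕ∞) < S x ω}
      = ∫⁻ u, Set.indicator {u : ℝ | (1+x)*u < A}
          (fun u => Measure.pi (fun _ : Fin k => μΛ) (gsrG A k ((1+x)*u))) u ∂μΛ := by
    intro k
    rw [hq x (k+1), pi_gsrG_succ μΛ A k x]
  have hqc : ∀ k:ℕ, Measurable (fun u : ℝ =>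
      Measure.pi (fun _ : Fin k => μΛ) (gsrG A k ((1+x)*u))) := fun k =>
    (hqmeas k).comp (measurable_id.const_mul (1+x))
  have hImeas : Measurable (fun u : ℝ =>
      Set.indicator {u : ℝ | (1+x)*u < A} (fun u => μ₂ ((1+x)*u)) u) :=
    ((hμ₂meas.comp (measurable_id.const_mul (1+x))).indicator msA)
  set D : ℝ≥0∞ := ∫⁻ u, Set.indicator {u : ℝ | (1+x)*u < A}
      (fun u => μ₂ ((1+x)*u)) u ∂μΛ with hDdef
  have hDsum : ∑' k:ℕ, (2*(k:ℝ≥0∞)+1) * P {ω | (((k+1:ℕ)):ℕ∞) < S x ω} = D := by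
    calc ∑' k:ℕ, (2*(k:ℝ≥0∞)+1) * P {ω | (((k+1:ℕ)):ℕ∞) < S x ω}
        = ∑' k:ℕ, ∫⁻ u, (2*(k:ℝ≥0∞)+1) * Set.indicator {u : ℝ | (1+x)*u < A}
            (fun u => Measure.pi (fun _ : Fin k => μΛ) (gsrG A k ((1+x)*u))) u ∂μΛ := by
          refine tsum_congr fun k => ?_
          rw [hstep k, ← lintegral_const_mul _ ((hqc k).indicator msA)]
      _ = ∫⁻ u, ∑' k:ℕ, (2*(k:ℝ≥0∞)+1) * Set.indicator {u : ℝ | (1+x)*u < A}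
            (fun u => Measure.pi (fun _ : Fin k => μΛ) (gsrG A k ((1+x)*u))) u ∂μΛ :=
          (lintegral_tsum fun k =>
            (measurable_const.mul ((hqc k).indicator msA)).aemeasurable).symm
      _ = D := by
          rw [hDdef]
          refine lintegral_congr fun u => ?_
          by_cases h : u ∈ {u : ℝ | (1+x)*u < A}
          · rw [Set.indicator_of_mem h, hμ₂q ((1+x)*u)]
            exact tsum_congr fun k => by rw [Set.indicator_of_mem h]
          · rw [Set.indicator_of_notMem h]
            simp [Set.indicator_of_notMem h]
  -- summing up: the key identity in ℝ≥0∞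
  have ha0 : P {ω | ((0:ℕ):ℕ∞) < S x ω} = 1 := by
    have huniv : {ω | ((0:ℕ):ℕ∞) < S x ω} = Set.univ := by
      ext ω
      simp only [Set.mem_setOf_eq, Set.mem_univ, iff_true]
      rw [hlt x ω 0]
      intro m h1 h2
      omega
    rw [huniv, measure_univ]
  set B : ℝ≥0∞ := ∑' k:ℕ, P {ω | (((k+1:ℕ)):ℕ∞) < S x ω} with hBdef
  have hℓx : ℓ x = 1 + B := by
    rw [hℓsum x, tsum_eq_zero_add' ENNReal.summable, ha0, hBdef]
  have hμx : μ₂ x = 1 + (2 * B + D) := by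
    rw [hμ₂sum x, tsum_eq_zero_add' ENNReal.summable]
    have h0 : (2*((0:ℕ):ℝ≥0∞)+1) * P {ω | ((0:ℕ):ℕ∞) < S x ω} = 1 := by
      rw [ha0, mul_one, Nat.cast_zero, mul_zero, zero_add]
    rw [h0]
    congr 1
    rw [← hDsum, hBdef, ← ENNReal.tsum_mul_left, ← ENNReal.tsum_add]
    refine tsum_congr fun k => ?_
    have hca : (2*((k+1:ℕ):ℝ≥0∞)+1) = 2 + (2*(k:ℝ≥0∞)+1) := by push_cast; ring
    rw [hca, add_mul]
  -- finiteness bookkeeping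
  have hμne : μ₂ x ≠ ⊤ := (hfin x hx.1).ne
  have hsum_ne : (1:ℝ≥0∞) + (2*B + D) ≠ ⊤ := by rw [← hμx]; exact hμne
  have h2BD : 2*B + D ≠ ⊤ := fun h => hsum_ne (by rw [h, add_top])
  have hDne : D ≠ ⊤ := fun h => h2BD (by rw [h, add_top])
  have h2Bne : 2*B ≠ ⊤ := fun h => h2BD (by rw [h, top_add])
  have hBne : B ≠ ⊤ := fun h => h2Bne (by rw [h, ENNReal.mul_top (by norm_num)])
  -- density change of variables : D as a Lebesgue integral against the kernel K
  have hKmeas : Measurable (K x) := by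
    have hKe : K x = fun y => p (y / (1+x)) / (1+x) := funext fun y => hK x y
    rw [hKe]
    exact (hp_meas.comp (measurable_id.div_const _)).div_const _
  have hgmeas : Measurable (fun y : ℝ => Set.indicator (Set.Iio A)
      (fun y => ENNReal.ofReal (p (y/(1+x))) * μ₂ y) y) :=
    ((hp_meas.comp (measurable_id.div_const _)).ennreal_ofReal.mul hμ₂meas).indicator
      measurableSet_Iio
  have hD1 : D = ∫⁻ u, Set.indicator (Set.Iio A)
      (fun y => ENNReal.ofReal (p (y/(1+x))) * μ₂ y) ((1+x)*u) ∂volume := by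
    rw [hDdef, hdens, lintegral_withDensity_eq_lintegral_mul volume
      hp_meas.ennreal_ofReal hImeas]
    refine lintegral_congr fun u => ?_
    simp only [Pi.mul_apply]
    by_cases h : (1+x)*u < A
    · rw [Set.indicator_of_mem (show u ∈ {u : ℝ | (1+x)*u < A} from h),
        Set.indicator_of_mem (show (1+x)*u ∈ Set.Iio A from h),
        mul_div_cancel_left₀ u hc.ne']
    · rw [Set.indicator_of_notMem (show u ∉ {u : ℝ | (1+x)*u < A} from h),
        Set.indicator_of_notMem (show (1+x)*u ∉ Set.Iio A from h), mul_zero]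
  have hD2 : D = ∫⁻ y, Set.indicator (Set.Iio A)
      (fun y => ENNReal.ofReal (K x y) * μ₂ y) y ∂volume := by
    rw [hD1]
    have hmap := lintegral_map (μ := volume) (g := fun u : ℝ => (1+x)*u) hgmeas
      (by exact measurable_id.const_mul (1+x))
    rw [← hmap, Real.map_volume_mul_left hc.ne', lintegral_smul_measure,
      abs_of_pos (inv_pos.2 hc), smul_eq_mul, ← lintegral_const_mul _ hgmeas]
    refine lintegral_congr fun y => ?_
    by_cases h : y ∈ Set.Iio A
    · rw [Set.indicator_of_mem h, Set.indicator_of_mem h, ← mul_assoc,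
        ← ENNReal.ofReal_mul (inv_nonneg.2 hc.le)]
      congr 2
      rw [hK]
      ring
    · rw [Set.indicator_of_notMem h, Set.indicator_of_notMem h, mul_zero]
  -- the part of the integral on (-∞,0) vanishes
  have hμΛ0 : μΛ (Set.Iio 0) = 0 := by
    rw [hμΛ, Measure.map_apply (hmeas 1) measurableSet_Iio]
    have : Λ 1 ⁻¹' Set.Iio 0 = ∅ := by
      ext ω
      simp only [Set.mem_preimage, Set.mem_Iio, Set.mem_empty_iff_false, iff_false, not_lt]
      exact hnonneg 1 ω
    rw [this, measure_empty]
  have hp_ae : ∀ᵐ t ∂(volume : Measure ℝ), t ∈ Set.Iio 0 → ENNReal.ofReal (p t) = 0 := by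
    rw [← ae_restrict_iff' measurableSet_Iio]
    have hz : ∫⁻ t in Set.Iio 0, ENNReal.ofReal (p t) ∂volume = 0 := by
      rw [← withDensity_apply _ measurableSet_Iio, ← hdens]
      exact hμΛ0
    have := (lintegral_eq_zero_iff hp_meas.ennreal_ofReal).1 hz
    filter_upwards [this] with t ht using ht
  set Nset : Set ℝ := {t : ℝ | t < 0 ∧ ENNReal.ofReal (p t) ≠ 0} with hNdef
  have hNmeas : MeasurableSet Nset :=
    (measurableSet_lt measurable_id measurable_const).inter
      (hp_meas.ennreal_ofReal (measurableSet_singleton 0).compl)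
  have hNnull : volume Nset = 0 := by
    rw [← le_zero_iff]
    refine le_trans (measure_mono ?_) (le_of_eq (ae_iff.1 hp_ae))
    intro t ht
    simp only [hNdef, Set.mem_setOf_eq] at ht ⊢
    exact fun hcon => ht.2 (hcon ht.1)
  have hNc : volume {y : ℝ | y/(1+x) ∈ Nset} = 0 := by
    have hmm : {y : ℝ | y/(1+x) ∈ Nset} = (fun y : ℝ => (1+x)⁻¹ * y) ⁻¹' Nset := by
      ext y
      simp [div_eq_inv_mul]
    rw [hmm, ← Measure.map_apply (by exact measurable_id.const_mul ((1+x)⁻¹)) hNmeas,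
      Real.map_volume_mul_left (inv_ne_zero hc.ne')]
    simp [hNnull]
  have hIio0 : ∫⁻ y in Set.Iio 0, ENNReal.ofReal (K x y) * μ₂ y ∂volume = 0 := by
    have hae : ∀ᵐ y ∂(volume : Measure ℝ), y ∈ Set.Iio 0
        → ENNReal.ofReal (K x y) * μ₂ y = 0 := by
      have hnm : ∀ᵐ y ∂(volume : Measure ℝ), y ∉ {y : ℝ | y/(1+x) ∈ Nset} :=
        measure_eq_zero_iff_ae_notMem.1 hNc
      filter_upwards [hnm] with y hy hylt
      have hdivneg : y/(1+x) < 0 := div_neg_of_neg_of_pos hylt hc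
      have hp0 : ENNReal.ofReal (p (y/(1+x))) = 0 := by
        by_contra hne
        exact hy ⟨hdivneg, hne⟩
      have hpz : p (y/(1+x)) = 0 :=
        le_antisymm (ENNReal.ofReal_eq_zero.1 hp0) (hp_nonneg _)
      rw [hK, hpz, zero_div, ENNReal.ofReal_zero, zero_mul]
    rw [setLIntegral_congr_fun_ae measurableSet_Iio hae, lintegral_zero]
  have hDIoc : D = ∫⁻ y in Set.Ioc 0 A, ENNReal.ofReal (K x y) * μ₂ y ∂volume := by
    rw [hD2, lintegral_indicator measurableSet_Iio,
      ← Set.Iio_union_Ico_eq_Iio hA.le,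
      lintegral_union measurableSet_Ico
        (by rw [Set.disjoint_left]; rintro t ht ⟨h0, _⟩; exact absurd h0 (not_le.2 ht)),
      hIio0, zero_add, Measure.restrict_congr_set Ico_ae_eq_Ioc]
  -- identification with the Bochner interval integral
  have hKnn : ∀ y, 0 ≤ K x y := fun y => by
    rw [hK]
    exact div_nonneg (hp_nonneg _) hc.le
  have hIntEq : ∫ y in (0:ℝ)..A, K x y * (μ₂ y).toReal = D.toReal := by
    rw [intervalIntegral.integral_of_le hA.le,
      integral_eq_lintegral_of_nonneg_ae
        (Filter.Eventually.of_forall fun y => mul_nonneg (hKnn y) ENNReal.toReal_nonneg)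
        (hKmeas.mul hμ₂meas.ennreal_toReal).aestronglyMeasurable]
    refine congrArg ENNReal.toReal ?_
    rw [hDIoc]
    refine setLIntegral_congr_fun measurableSet_Ioc
      (fun y hy => ?_)
    rw [ENNReal.ofReal_mul (hKnn y), ENNReal.ofReal_toReal (hfin y hy.1.le).ne]
  -- final arithmetic
  have h1 : (μ₂ x).toReal = 1 + (2 * B.toReal + D.toReal) := by
    rw [hμx, ENNReal.toReal_add ENNReal.one_ne_top h2BD, ENNReal.toReal_add h2Bne hDne,
      ENNReal.toReal_mul, ENNReal.toReal_one]
    norm_num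
  have h2 : (ℓ x).toReal = 1 + B.toReal := by
    rw [hℓx, ENNReal.toReal_add ENNReal.one_ne_top hBne, ENNReal.toReal_one]
  rw [hIntEq, h1, h2]
  ring
end

section
/- (Theorem 3.1) Let A > 0 and X = C([0,A], ℝ) with the supremum norm. Let K : X → X be a bounded linear positive operator (u ≥ 0 implies K u ≥ 0) with ‖K‖ < 1, and let ℓ ∈ X be the unique solution of ℓ = 𝟙 + K ℓ, where 𝟙 is the constant-one function. Let 0 = x_0 < x_1 < … < x_{N−1} = A be a partition with mesh h = max_i (x_i − x_{i−1}), and let π : X → X be the piecewise linear interpolation operator at the nodes x_0, …, x_{N−1}. Assume ℓ is twice continuously differentiable on [0,A], that I − K∘π is invertible with ‖(I − K∘π)⁻¹‖ ≤ ‖(I − K)⁻¹‖, and let ℓ̃ ∈ X satisfy ℓ̃ = 𝟙 + K(π ℓ̃). Then ‖ℓ − ℓ̃‖_∞ ≤ ‖ℓ‖_∞ · ‖ℓ''‖_∞ · h²/8. -/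
open Set

set_option maxHeartbeats 1000000

lemma my_conv {A M : ℝ} {g g' g'' : ℝ → ℝ}
    (hc : ContinuousOn g (Icc 0 A))
    (h1 : ∀ s ∈ Icc (0:ℝ) A, HasDerivWithinAt g (g' s) (Icc 0 A) s)
    (h2 : ∀ s ∈ Icc (0:ℝ) A, HasDerivWithinAt g' (g'' s) (Icc 0 A) s)
    (h0 : ∀ s ∈ Icc (0:ℝ) A, 0 ≤ M + g'' s) :
    ConvexOn ℝ (Icc 0 A) (fun s => M / 2 * s ^ 2 + g s) := by
  apply convexOn_of_hasDerivWithinAt2_nonneg (convex_Icc 0 A)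
    (f' := fun s => M * s + g' s) (f'' := fun s => M + g'' s)
  · exact (continuousOn_const.mul ((continuous_pow 2).continuousOn)).add hc
  · intro s hs
    have hs' : s ∈ Icc (0:ℝ) A := interior_subset hs
    have hq : HasDerivWithinAt (fun s : ℝ => M / 2 * s ^ 2) (M * s)
        (interior (Icc (0:ℝ) A)) s := by
      have := ((hasDerivAt_pow 2 s).const_mul (M / 2)).hasDerivWithinAt
        (s := interior (Icc (0:ℝ) A))
      convert this using 1
      · rfl
      · rfl
      · rw [show (2:ℕ) - 1 = 1 from rfl]; push_cast; ring
    exact hq.add ((h1 s hs').mono interior_subset)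
  · intro s hs
    have hs' : s ∈ Icc (0:ℝ) A := interior_subset hs
    have hq : HasDerivWithinAt (fun s : ℝ => M * s) M (interior (Icc (0:ℝ) A)) s := by
      simpa using ((hasDerivAt_id s).const_mul M).hasDerivWithinAt
        (s := interior (Icc (0:ℝ) A))
    exact hq.add ((h2 s hs').mono interior_subset)
  · exact fun s hs => h0 s (interior_subset hs)


lemma my_interp {A M : ℝ} {g : ℝ → ℝ} (hg : ContDiffOn ℝ 2 g (Icc 0 A))
    (hM : ∀ t ∈ Icc (0:ℝ) A, |iteratedDerivWithin 2 g (Icc 0 A) t| ≤ M)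
    {a b t : ℝ} (ha : a ∈ Icc (0:ℝ) A) (hb : b ∈ Icc (0:ℝ) A) (hab : a < b)
    (ht : t ∈ Icc a b) :
    |g t - (g a * ((b - t) / (b - a)) + g b * ((t - a) / (b - a)))| ≤ M * (b - a) ^ 2 / 8 := by
  have hA : (0:ℝ) < A := lt_of_le_of_lt ha.1 (lt_of_lt_of_le hab hb.2)
  have huniq : UniqueDiffOn ℝ (Icc (0:ℝ) A) := uniqueDiffOn_Icc hA
  set G' := derivWithin g (Icc 0 A) with hG'
  set G'' := iteratedDerivWithin 2 g (Icc 0 A) with hG''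
  have hd1 : ∀ s ∈ Icc (0:ℝ) A, HasDerivWithinAt g (G' s) (Icc 0 A) s := by
    intro s hs
    exact ((hg.differentiableOn (by norm_num)) s hs).hasDerivWithinAt
  have hg1 : ContDiffOn ℝ 1 G' (Icc 0 A) := hg.derivWithin huniq (by norm_num)
  have hd2 : ∀ s ∈ Icc (0:ℝ) A, HasDerivWithinAt G' (G'' s) (Icc 0 A) s := by
    intro s hs
    have hdd := ((hg1.differentiableOn (by norm_num)) s hs).hasDerivWithinAt
    have heq : G'' s = derivWithin G' (Icc 0 A) s := by
      rw [hG'', iteratedDerivWithin_succ]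
      apply derivWithin_congr
      · intro y hy
        exact congrFun iteratedDerivWithin_one y
      · exact congrFun iteratedDerivWithin_one s
    rwa [heq]
  have hM0 : 0 ≤ M := le_trans (abs_nonneg _) (hM a ha)
  have cvx1 : ConvexOn ℝ (Icc 0 A) (fun s => M / 2 * s ^ 2 + g s) :=
    my_conv hg.continuousOn hd1 hd2 (fun s hs => by
      have := abs_le.1 (hM s hs); linarith [this.1])
  have cvx2 : ConvexOn ℝ (Icc 0 A) (fun s => M / 2 * s ^ 2 + (fun u => -g u) s) :=
    my_conv (g := fun u => -g u) (g' := fun u => -G' u) (g'' := fun u => -G'' u)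
      hg.continuousOn.neg (fun s hs => (hd1 s hs).neg) (fun s hs => (hd2 s hs).neg)
      (fun s hs => by have := abs_le.1 (hM s hs); linarith [this.2])
  have hd : (0:ℝ) < b - a := by linarith [hab]
  set α := (b - t) / (b - a) with hα_def
  set β := (t - a) / (b - a) with hβ_def
  have hα : 0 ≤ α := div_nonneg (by linarith [ht.2]) hd.le
  have hβ : 0 ≤ β := div_nonneg (by linarith [ht.1]) hd.le
  have hαβ : α + β = 1 := by
    rw [hα_def, hβ_def, ← add_div]
    field_simp
    ring
  have htsum : α * a + β * b = t := by
    rw [hα_def, hβ_def]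
    field_simp
    ring
  have h1t := cvx1.2 ha hb hα hβ hαβ
  have h2t := cvx2.2 ha hb hα hβ hαβ
  simp only [smul_eq_mul, htsum] at h1t h2t
  have hq : α * a ^ 2 + β * b ^ 2 - t ^ 2 = α * β * (b - a) ^ 2 := by
    rw [← htsum]
    have hβ1 : β = 1 - α := by linarith
    rw [hβ1]; ring
  have hq' : M / 2 * (α * a ^ 2 + β * b ^ 2 - t ^ 2) = M / 2 * (α * β * (b - a) ^ 2) := by
    rw [hq]
  have hαβ4 : α * β * (b - a) ^ 2 ≤ (b - a) ^ 2 / 4 := by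
    nlinarith [mul_le_mul_of_nonneg_right
      (show 4 * (α * β) ≤ 1 by nlinarith [sq_nonneg (α - β)]) (sq_nonneg (b - a))]
  have e2 : M / 2 * (α * β * (b - a) ^ 2) ≤ M * (b - a) ^ 2 / 8 := by
    have := mul_le_mul_of_nonneg_left hαβ4 (show (0:ℝ) ≤ M / 2 by linarith)
    linarith
  have e1 : g t - (g a * α + g b * β) ≤ M / 2 * (α * β * (b - a) ^ 2) := by
    linarith [h1t, hq']
  have e1' : -(g t - (g a * α + g b * β)) ≤ M / 2 * (α * β * (b - a) ^ 2) := by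
    linarith [h2t, hq']
  rw [abs_le]
  constructor <;> linarith


/-- **Theorem 3.1.** Error bound for the iterated collocation solution
of the ARL Fredholm equation with piecewise linear interpolation: if `K` is a positive
bounded linear operator on `C([0,A],ℝ)` with `‖K‖ < 1`, `ℓ = 𝟙 + K ℓ`, `proj` is the
piecewise linear interpolation operator at the partition nodes `x 0 = 0 < … < x (N-1) = A`
of mesh at most `h`, `ℓ` is twice continuously differentiable with `|ℓ''| ≤ M`,
`I - K∘proj` is invertible with `‖(I - K∘proj)⁻¹‖ ≤ ‖(I - K)⁻¹‖`, and `ℓt = 𝟙 + K (proj ℓt)`,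
then `‖ℓ - ℓt‖ ≤ ‖ℓ‖ * M * h² / 8`. -/
theorem stmt14 (A : ℝ) (hA : 0 < A)
    (K : C(Icc (0:ℝ) A, ℝ) →L[ℝ] C(Icc (0:ℝ) A, ℝ))
    (hKpos : ∀ u : C(Icc (0:ℝ) A, ℝ), (∀ t, 0 ≤ u t) → ∀ t, 0 ≤ (K u) t)
    (hKnorm : ‖K‖ < 1)
    (ℓ : C(Icc (0:ℝ) A, ℝ)) (hℓ : ℓ = 1 + K ℓ)
    (N : ℕ) (hN : 2 ≤ N)
    (x : ℕ → ℝ) (hx0 : x 0 = 0) (hxN : x (N - 1) = A)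
    (hxmem : ∀ i, i ≤ N - 1 → x i ∈ Icc (0:ℝ) A)
    (hxinc : ∀ i, i + 1 ≤ N - 1 → x i < x (i + 1))
    (h : ℝ) (hmesh : ∀ i, i + 1 ≤ N - 1 → x (i + 1) - x i ≤ h)
    (proj : C(Icc (0:ℝ) A, ℝ) →L[ℝ] C(Icc (0:ℝ) A, ℝ))
    (hproj : ∀ (u : C(Icc (0:ℝ) A, ℝ)) (i : ℕ), i + 1 ≤ N - 1 →
      ∀ (hi : x i ∈ Icc (0:ℝ) A) (hi1 : x (i + 1) ∈ Icc (0:ℝ) A)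
        (t : Icc (0:ℝ) A), (t : ℝ) ∈ Icc (x i) (x (i + 1)) →
        (proj u) t = u ⟨x i, hi⟩ * ((x (i + 1) - (t : ℝ)) / (x (i + 1) - x i))
          + u ⟨x (i + 1), hi1⟩ * (((t : ℝ) - x i) / (x (i + 1) - x i)))
    (g : ℝ → ℝ) (hgℓ : ∀ t : Icc (0:ℝ) A, g t = ℓ t)
    (hg : ContDiffOn ℝ 2 g (Icc 0 A))
    (M : ℝ) (hM : ∀ t ∈ Icc (0:ℝ) A, |iteratedDerivWithin 2 g (Icc 0 A) t| ≤ M)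
    (hBex : ∃ B, B * (1 - K * proj) = 1 ∧ (1 - K * proj) * B = 1)
    (hinv : ∀ (B C : C(Icc (0:ℝ) A, ℝ) →L[ℝ] C(Icc (0:ℝ) A, ℝ)),
      B * (1 - K * proj) = 1 → (1 - K * proj) * B = 1 →
      C * (1 - K) = 1 → (1 - K) * C = 1 → ‖B‖ ≤ ‖C‖)
    (ℓt : C(Icc (0:ℝ) A, ℝ)) (hℓt : ℓt = 1 + K (proj ℓt)) :
    ‖ℓ - ℓt‖ ≤ ‖ℓ‖ * M * h ^ 2 / 8 := by
  classical
  -- the inverse of 1 - K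
  have hUnit : IsUnit ((1 : C(Icc (0:ℝ) A, ℝ) →L[ℝ] C(Icc (0:ℝ) A, ℝ)) - K) := by
    have := (Units.oneSub K hKnorm).isUnit
    rwa [Units.val_oneSub] at this
  set Cop : C(Icc (0:ℝ) A, ℝ) →L[ℝ] C(Icc (0:ℝ) A, ℝ) := Ring.inverse (1 - K) with hCopd
  have hCleft : Cop * (1 - K) = 1 := Ring.inverse_mul_cancel _ hUnit
  have hCright : (1 - K) * Cop = 1 := Ring.mul_inverse_cancel _ hUnit
  obtain ⟨B, hB1, hB2⟩ := hBex
  have hBC : ‖B‖ ≤ ‖Cop‖ := hinv B Cop hB1 hB2 hCleft hCright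
  -- positivity of Cop
  have hS : HasSum (fun n : ℕ => K ^ n) (Ring.inverse (1 - K)) :=
    hasSum_geom_series_inverse K hKnorm
  have hCpos : ∀ u : C(Icc (0:ℝ) A, ℝ), (∀ s, 0 ≤ u s) → ∀ s, 0 ≤ (Cop u) s := by
    intro u hu s
    have hpow : ∀ n : ℕ, ∀ s, 0 ≤ ((K ^ n) u) s := by
      intro n
      induction n with
      | zero => simpa using hu
      | succ m ih =>
        intro s
        rw [pow_succ', ContinuousLinearMap.mul_apply]
        exact hKpos ((K ^ m) u) ih s
    set E := (ContinuousMap.evalCLM (R := ℝ) s).comp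
      (ContinuousLinearMap.apply ℝ C(Icc (0:ℝ) A, ℝ) u) with hEd
    have hE : ∀ T : C(Icc (0:ℝ) A, ℝ) →L[ℝ] C(Icc (0:ℝ) A, ℝ), E T = (T u) s := fun T => rfl
    have hmap := hS.map E E.continuous
    have heval : (Cop u) s = ∑' n : ℕ, ((K ^ n) u) s := by
      rw [← hE Cop, hCopd, ← hmap.tsum_eq]
      exact tsum_congr (fun n => (hE _).symm)
    rw [heval]
    exact tsum_nonneg (fun n => hpow n s)
  -- Cop 1 = ℓ
  have hone : (1 - K) ℓ = (1 : C(Icc (0:ℝ) A, ℝ)) := by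
    rw [ContinuousLinearMap.sub_apply, ContinuousLinearMap.one_apply]
    nth_rewrite 1 [hℓ]
    abel
  have hCl : Cop (1 : C(Icc (0:ℝ) A, ℝ)) = ℓ := by
    rw [← hone]
    have : Cop ((1 - K) ℓ) = (Cop * (1 - K)) ℓ := rfl
    rw [this, hCleft, ContinuousLinearMap.one_apply]
  -- norm of Cop
  have hCnorm : ‖Cop‖ ≤ ‖ℓ‖ := by
    apply ContinuousLinearMap.opNorm_le_bound Cop (norm_nonneg ℓ)
    intro u
    apply (ContinuousMap.norm_le _ (mul_nonneg (norm_nonneg ℓ) (norm_nonneg u))).mpr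
    intro s
    have hub : ∀ s : Icc (0:ℝ) A, u s ≤ ‖u‖ ∧ -‖u‖ ≤ u s := by
      intro s
      have := u.norm_coe_le_norm s
      rw [Real.norm_eq_abs] at this
      exact ⟨le_trans (le_abs_self _) this, neg_le_of_neg_le (le_trans (neg_le_abs _) this)⟩
    have hp1 : 0 ≤ (Cop (‖u‖ • (1 : C(Icc (0:ℝ) A, ℝ)) - u)) s := by
      apply hCpos _ (fun s' => ?_) s
      have := (hub s').1
      simp only [ContinuousMap.sub_apply, ContinuousMap.smul_apply,
        ContinuousMap.one_apply, smul_eq_mul, mul_one]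
      linarith
    have hp2 : 0 ≤ (Cop (‖u‖ • (1 : C(Icc (0:ℝ) A, ℝ)) + u)) s := by
      apply hCpos _ (fun s' => ?_) s
      have := (hub s').2
      simp only [ContinuousMap.add_apply, ContinuousMap.smul_apply,
        ContinuousMap.one_apply, smul_eq_mul, mul_one]
      linarith
    rw [map_sub, map_smul, hCl] at hp1
    rw [map_add, map_smul, hCl] at hp2
    simp only [ContinuousMap.sub_apply, ContinuousMap.add_apply,
      ContinuousMap.smul_apply, smul_eq_mul] at hp1 hp2
    have hls : ℓ s ≤ ‖ℓ‖ := by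
      have := ℓ.norm_coe_le_norm s
      rw [Real.norm_eq_abs] at this
      exact le_trans (le_abs_self _) this
    rw [Real.norm_eq_abs, abs_le]
    constructor
    · nlinarith [norm_nonneg u]
    · nlinarith [norm_nonneg u]
  -- the equation for the error
  have h1 : ℓ - ℓt = K ℓ - K (proj ℓt) := by
    conv_lhs => rw [hℓ, hℓt]
    abel
  have e1 : (1 - K * proj) (ℓ - ℓt) = K (ℓ - proj ℓ) := by
    have hx1 : (1 - K * proj) (ℓ - ℓt) = (ℓ - ℓt) - K (proj (ℓ - ℓt)) := by
      rw [ContinuousLinearMap.sub_apply, ContinuousLinearMap.one_apply,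
        ContinuousLinearMap.mul_apply]
    rw [hx1]
    simp only [map_sub]
    rw [h1]
    abel
  have key : ℓ - ℓt = B (K (ℓ - proj ℓ)) := by
    rw [← e1]
    have : B ((1 - K * proj) (ℓ - ℓt)) = (B * (1 - K * proj)) (ℓ - ℓt) := rfl
    rw [this, hB1, ContinuousLinearMap.one_apply]
  -- basic positivity facts
  have hM0 : 0 ≤ M := le_trans (abs_nonneg _) (hM 0 ⟨le_refl _, hA.le⟩)
  have hh0 : 0 < h := lt_of_lt_of_le (sub_pos.mpr (hxinc 0 (by omega))) (hmesh 0 (by omega))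
  -- the interpolation error bound
  have hnormint : ‖ℓ - proj ℓ‖ ≤ M * h ^ 2 / 8 := by
    apply (ContinuousMap.norm_le _ (by positivity)).mpr
    intro t
    -- find the subinterval containing t
    set n := N - 2 with hn
    have hP0 : x 0 ≤ (t : ℝ) := by rw [hx0]; exact t.2.1
    obtain ⟨i, hile, hxi, hnota⟩ :
        ∃ i, i ≤ n ∧ x i ≤ (t : ℝ) ∧ (i < n → ¬ x (i + 1) ≤ (t : ℝ)) := by
      refine ⟨Nat.findGreatest (fun j => x j ≤ (t : ℝ)) n, Nat.findGreatest_le n,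
        Nat.findGreatest_spec (P := fun j => x j ≤ (t : ℝ)) (Nat.zero_le n) hP0, ?_⟩
      intro hlt hcon
      exact Nat.findGreatest_is_greatest (P := fun j => x j ≤ (t : ℝ)) (n := n) (Nat.lt_succ_self _) (by omega) hcon
    have hti1 : (t : ℝ) ≤ x (i + 1) := by
      rcases eq_or_lt_of_le hile with heq | hlt
      · have : i + 1 = N - 1 := by omega
        rw [this, hxN]
        exact t.2.2
      · by_contra hcon
        push_neg at hcon
        exact (hnota hlt) hcon.le
    have hi1 : i + 1 ≤ N - 1 := by omega
    have hmi : x i ∈ Icc (0:ℝ) A := hxmem i (by omega)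
    have hmi1 : x (i + 1) ∈ Icc (0:ℝ) A := hxmem (i + 1) hi1
    have hlt : x i < x (i + 1) := hxinc i hi1
    rw [ContinuousMap.sub_apply, hproj ℓ i hi1 hmi hmi1 t ⟨hxi, hti1⟩]
    rw [← hgℓ t, ← hgℓ ⟨x i, hmi⟩, ← hgℓ ⟨x (i + 1), hmi1⟩]
    rw [Real.norm_eq_abs]
    have hbd := my_interp hg hM hmi hmi1 hlt (⟨hxi, hti1⟩ : (t:ℝ) ∈ Icc (x i) (x (i+1)))
    refine le_trans hbd ?_
    have hm : x (i + 1) - x i ≤ h := hmesh i hi1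
    have hsq : (x (i + 1) - x i) ^ 2 ≤ h ^ 2 := by nlinarith [hlt]
    have := mul_le_mul_of_nonneg_left hsq hM0
    linarith
  -- assembly
  have step1 : ‖ℓ - ℓt‖ ≤ ‖B‖ * (‖K‖ * ‖ℓ - proj ℓ‖) := by
    rw [key]
    refine le_trans (B.le_opNorm _) ?_
    exact mul_le_mul_of_nonneg_left (K.le_opNorm _) (norm_nonneg B)
  have sK : ‖K‖ * ‖ℓ - proj ℓ‖ ≤ ‖ℓ - proj ℓ‖ :=
    mul_le_of_le_one_left (norm_nonneg _) hKnorm.le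
  have hBl : ‖B‖ ≤ ‖ℓ‖ := le_trans hBC hCnorm
  have step2 : ‖B‖ * (‖K‖ * ‖ℓ - proj ℓ‖) ≤ ‖ℓ‖ * (M * h ^ 2 / 8) := by
    refine mul_le_mul hBl (le_trans sK hnormint) ?_ (norm_nonneg ℓ)
    positivity
  calc ‖ℓ - ℓt‖ ≤ ‖ℓ‖ * (M * h ^ 2 / 8) := le_trans step1 step2
    _ = ‖ℓ‖ * M * h ^ 2 / 8 := by ring
end
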